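/- For each k ≥ 1 let N_k = p_1·p_2·...·p_k be the product of the first k primes and let H_k = {0, N_k, 2N_k, ..., (k-1)N_k}. Then the Selberg constants 𝔖(H_k) = ∏_p (1 - ν_p(H_k)/p)·(1 - 1/p)^{-k} (product over all primes p) tend to infinity as k → ∞. -/

import Mathlib

/-- `nu p H` is the number of distinct residues of the elements of `H` modulo `p`. -/
def nu (p : ℕ) (H : Finset ℤ) : ℕ := (H.image (fun h : ℤ => (h : ZMod p))).card

/-- The product of the first `k` primes (the `k`-th primorial). -/
noncomputable def primorialK (k : ℕ) : ℕ := ∏ i ∈ Finset.range k, Nat.nth Nat.Prime i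

/-- The pattern `H_k = {0, N_k, 2·N_k, …, (k-1)·N_k}` where `N_k` is the `k`-th primorial. -/
noncomputable def patternHk (k : ℕ) : Finset ℤ := (Finset.range k).image (fun j : ℕ => (j : ℤ) * (primorialK k : ℤ))


open Nat Finset

lemma nth_prime_ge (i : ℕ) : 2 * i + 1 ≤ Nat.nth Nat.Prime i := by
  induction i with
  | zero => simp [Nat.nth_prime_zero_eq_two]
  | succ i ih =>
    rcases Nat.eq_zero_or_pos i with h | h
    · subst h; simp only [zero_add]; have := Nat.nth_prime_one_eq_three; omega
    · have h1 : Nat.nth Nat.Prime i < Nat.nth Nat.Prime (i+1) :=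
        Nat.nth_strictMono Nat.infinite_setOf_prime (lt_add_one i)
      have h2 : 2 < Nat.nth Nat.Prime i := by
        have := Nat.nth_strictMono Nat.infinite_setOf_prime h
        rwa [Nat.nth_prime_zero_eq_two] at this
      have ho1 : Nat.nth Nat.Prime i % 2 = 1 :=
        Nat.odd_iff.mp ((Nat.prime_nth_prime i).odd_of_ne_two (by omega))
      have ho2 : Nat.nth Nat.Prime (i+1) % 2 = 1 :=
        Nat.odd_iff.mp ((Nat.prime_nth_prime (i+1)).odd_of_ne_two (by omega))
      omega

lemma dvd_primorial_iff {p k : ℕ} (hp : p.Prime) :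
    p ∣ primorialK k ↔ ∃ i < k, Nat.nth Nat.Prime i = p := by
  rw [primorialK, hp.prime.dvd_finset_prod_iff]
  constructor
  · rintro ⟨i, hi, hd⟩
    exact ⟨i, mem_range.mp hi, ((Nat.prime_dvd_prime_iff_eq hp (Nat.prime_nth_prime i)).mp hd).symm⟩
  · rintro ⟨i, hi, rfl⟩
    exact ⟨i, mem_range.mpr hi, dvd_rfl⟩

lemma ge_of_not_dvd_primorial {p k : ℕ} (hp : p.Prime) (h : ¬ p ∣ primorialK k) :
    2 * k + 1 ≤ p := by
  have hpe : Nat.nth Nat.Prime (Nat.count Nat.Prime p) = p := Nat.nth_count hp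
  set j := Nat.count Nat.Prime p with hj
  have hjk : k ≤ j := by
    by_contra hlt
    exact h ((dvd_primorial_iff hp).mpr ⟨j, by omega, hpe⟩)
  calc 2*k+1 ≤ 2*j+1 := by omega
    _ ≤ Nat.nth Nat.Prime j := nth_prime_ge j
    _ = p := hpe

lemma nu_of_dvd {p k : ℕ} (hk : 1 ≤ k) (hp : p.Prime) (hd : p ∣ primorialK k) :
    nu p (patternHk k) = 1 := by
  haveI : Fact p.Prime := ⟨hp⟩
  rw [nu, patternHk, Finset.image_image]
  have : ∀ j ∈ range k, ((fun h : ℤ => (h : ZMod p)) ∘ fun j : ℕ => (j : ℤ) * (primorialK k : ℤ)) j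
      = (0 : ZMod p) := by
    intro j _
    have hN : ((primorialK k : ℕ) : ZMod p) = 0 := (ZMod.natCast_eq_zero_iff _ _).mpr hd
    simp only [Function.comp_apply, Int.cast_mul, Int.cast_natCast]
    rw [hN, mul_zero]
  rw [Finset.image_congr (fun j hj => this j hj), Finset.image_const ⟨0, mem_range.mpr hk⟩]
  simp

lemma nu_of_not_dvd {p k : ℕ} (hp : p.Prime) (hd : ¬ p ∣ primorialK k) :
    nu p (patternHk k) = k := by
  haveI : Fact p.Prime := ⟨hp⟩
  have hkp : 2 * k + 1 ≤ p := ge_of_not_dvd_primorial hp hd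
  rw [nu, patternHk, Finset.image_image]
  rw [Finset.card_image_of_injOn, Finset.card_range]
  intro a ha b hb hab
  simp only [Function.comp_apply, Int.cast_mul, Int.cast_natCast] at hab
  have hN : ((primorialK k : ℕ) : ZMod p) ≠ 0 := fun h =>
    hd ((ZMod.natCast_eq_zero_iff _ _).mp h)
  have hab' : ((a : ZMod p)) = (b : ZMod p) := mul_right_cancel₀ hN hab
  simp only [Finset.coe_range, Set.mem_Iio] at ha hb
  have h2 := congrArg ZMod.val hab'
  rwa [ZMod.val_cast_of_lt (by omega), ZMod.val_cast_of_lt (by omega)] at h2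

open Real Filter

noncomputable def selF (k : ℕ) (p : Nat.Primes) : ℝ :=
  (1 - (nu p (patternHk k) : ℝ) / ((p : ℕ) : ℝ)) * (1 - 1 / ((p : ℕ) : ℝ)) ^ (-(k : ℤ))

noncomputable def sFin (k : ℕ) : Finset Nat.Primes :=
  (range k).image (fun i => ⟨Nat.nth Nat.Prime i, Nat.prime_nth_prime i⟩)

lemma mem_sFin_iff {k : ℕ} {p : Nat.Primes} : p ∈ sFin k ↔ (p : ℕ) ∣ primorialK k := by
  rw [sFin]; refine Finset.mem_image.trans ?_; rw [dvd_primorial_iff p.2]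
  constructor
  · rintro ⟨i, hi, rfl⟩; exact ⟨i, mem_range.mp hi, rfl⟩
  · rintro ⟨i, hi, hip⟩
    exact ⟨i, mem_range.mpr hi, Subtype.ext hip⟩

section analytic

variable {k : ℕ} (hk : 4 ≤ k) {p : Nat.Primes}

lemma prime_two_le (p : Nat.Primes) : (2:ℝ) ≤ ((p:ℕ):ℝ) := by exact_mod_cast p.2.two_le

lemma base_pos (p : Nat.Primes) : (0:ℝ) < 1 - 1 / ((p:ℕ):ℝ) := by
  have := prime_two_le p
  have hx : (0:ℝ) < ((p:ℕ):ℝ) := by linarith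
  rw [sub_pos, div_lt_one hx]; linarith

lemma selF_mem (hk : 1 ≤ k) (hp : p ∈ sFin k) :
    selF k p = (1 - 1 / ((p:ℕ):ℝ)) * (1 - 1 / ((p:ℕ):ℝ)) ^ (-(k : ℤ)) := by
  rw [selF, nu_of_dvd hk p.2 (mem_sFin_iff.mp hp)]
  norm_num

lemma tail_ge (hp : p ∉ sFin k) : 2 * k + 1 ≤ (p : ℕ) :=
  ge_of_not_dvd_primorial p.2 (fun h => hp (mem_sFin_iff.mpr h))

lemma selF_not_mem (hp : p ∉ sFin k) :
    selF k p = (1 - (k:ℝ) / ((p:ℕ):ℝ)) * (1 - 1 / ((p:ℕ):ℝ)) ^ (-(k : ℤ)) := by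
  rw [selF, nu_of_not_dvd p.2 (fun h => hp (mem_sFin_iff.mpr h))]

lemma tail_factor_pos (hp : p ∉ sFin k) : (0:ℝ) < 1 - (k:ℝ) / ((p:ℕ):ℝ) := by
  have h := tail_ge hp
  have hx : ((2*k+1 : ℕ):ℝ) ≤ ((p:ℕ):ℝ) := by exact_mod_cast h
  push_cast at hx
  have h2 := prime_two_le p
  have hx0 : (0:ℝ) < ((p:ℕ):ℝ) := by linarith
  rw [sub_pos, div_lt_one hx0]; linarith

lemma selF_pos (hk : 1 ≤ k) (p : Nat.Primes) : 0 < selF k p := by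
  by_cases hp : p ∈ sFin k
  · rw [selF_mem hk hp]
    exact mul_pos (base_pos p) (zpow_pos (base_pos p) _)
  · rw [selF_not_mem hp]
    exact mul_pos (tail_factor_pos hp) (zpow_pos (base_pos p) _)

lemma log_selF_mem (hk : 1 ≤ k) (hp : p ∈ sFin k) :
    log (selF k p) = (1 - (k:ℝ)) * log (1 - 1 / ((p:ℕ):ℝ)) := by
  rw [selF_mem hk hp, log_mul (ne_of_gt (base_pos p)) (ne_of_gt (zpow_pos (base_pos p) _)),
    log_zpow]
  push_cast; ring

lemma log_selF_mem_nonneg (hk : 1 ≤ k) (hp : p ∈ sFin k) : 0 ≤ log (selF k p) := by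
  rw [log_selF_mem hk hp]
  have h1 : log (1 - 1 / ((p:ℕ):ℝ)) ≤ 0 := by
    apply log_nonpos (le_of_lt (base_pos p))
    have := prime_two_le p
    have : (0:ℝ) < ((p:ℕ):ℝ) := by linarith
    have : 0 < 1 / ((p:ℕ):ℝ) := by positivity
    linarith
  have h2 : (1 - (k:ℝ)) ≤ 0 := by
    have : (1:ℝ) ≤ (k:ℝ) := by exact_mod_cast hk
    linarith
  nlinarith

lemma log_selF_tail_eq (hp : p ∉ sFin k) :
    log (selF k p) = log (1 - (k:ℝ) / ((p:ℕ):ℝ)) - (k:ℝ) * log (1 - 1 / ((p:ℕ):ℝ)) := by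
  rw [selF_not_mem hp, log_mul (ne_of_gt (tail_factor_pos hp)) (ne_of_gt (zpow_pos (base_pos p) _)),
    log_zpow]
  push_cast; ring

lemma log_selF_tail_nonpos (hk : 1 ≤ k) (hp : p ∉ sFin k) : log (selF k p) ≤ 0 := by
  apply log_nonpos (le_of_lt (selF_pos hk p))
  rw [selF_not_mem hp]
  have hb := base_pos p
  have h2 := prime_two_le p
  have hber : 1 - (k:ℝ)/((p:ℕ):ℝ) ≤ (1 - 1/((p:ℕ):ℝ))^k := by
    have h := one_add_mul_le_pow (a := -(1/((p:ℕ):ℝ))) (by nlinarith) k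
    calc 1 - (k:ℝ)/((p:ℕ):ℝ) = 1 + (k:ℝ)*(-(1/((p:ℕ):ℝ))) := by ring
    _ ≤ (1 + -(1/((p:ℕ):ℝ)))^k := h
    _ = (1-1/((p:ℕ):ℝ))^k := by ring_nf
  rw [zpow_neg, zpow_natCast]
  calc (1 - (k:ℝ)/((p:ℕ):ℝ)) * ((1-1/((p:ℕ):ℝ))^k)⁻¹
      ≤ (1-1/((p:ℕ):ℝ))^k * ((1-1/((p:ℕ):ℝ))^k)⁻¹ :=
        mul_le_mul_of_nonneg_right hber (inv_nonneg.mpr (pow_nonneg hb.le k))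
    _ = 1 := mul_inv_cancel₀ (ne_of_gt (pow_pos hb k))

lemma log_selF_tail_lb (hk : 1 ≤ k) (hp : p ∉ sFin k) :
    -log (selF k p) ≤ (k:ℝ)^2 / (((p:ℕ):ℝ) - (k:ℝ))^2 := by
  have hx21 : ((2*k+1 : ℕ):ℝ) ≤ ((p:ℕ):ℝ) := by exact_mod_cast tail_ge hp
  push_cast at hx21
  set x := ((p:ℕ):ℝ) with hxdef
  have hk1 : (1:ℝ) ≤ (k:ℝ) := by exact_mod_cast hk
  have hx0 : (0:ℝ) < x := by linarith
  have hxk : (0:ℝ) < x - k := by linarith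
  have hb : (0:ℝ) < 1 - 1/x := base_pos p
  have ht : (0:ℝ) < 1 - (k:ℝ)/x := tail_factor_pos hp
  have h1 : log (1 - 1/x) ≤ -(1/x) := by
    have := log_le_sub_one_of_pos hb; linarith
  have h2 : -((k:ℝ)/(x-k)) ≤ log (1 - (k:ℝ)/x) := by
    have h3 := one_sub_inv_le_log_of_pos ht
    have h4 : 1 - (1 - (k:ℝ)/x)⁻¹ = -((k:ℝ)/(x-k)) := by
      rw [show (1 - (k:ℝ)/x) = (x-k)/x by field_simp, inv_div]
      field_simp
      ring
    linarith
  rw [log_selF_tail_eq hp, ← hxdef]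
  have h5 : (k:ℝ) * log (1-1/x) ≤ (k:ℝ) * (-(1/x)) :=
    mul_le_mul_of_nonneg_left h1 (by linarith)
  have h5b : (k:ℝ) * log (1-1/x) ≤ -((k:ℝ)/x) := by
    have h7 : (k:ℝ) * (-(1/x)) = -((k:ℝ)/x) := by ring
    linarith
  have h6' : (k:ℝ)/(x-k) - (k:ℝ)/x = (k:ℝ)^2/((x-k)*x) := by
    field_simp; ring
  have h6 : (k:ℝ)^2/((x-k)*x) ≤ (k:ℝ)^2/(x-k)^2 := by
    gcongr <;> nlinarith
  linarith

end analytic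

noncomputable def gg (k : ℕ) (m : ℕ) : ℝ := if k+1 ≤ m then (k:ℝ)^2 * ((m:ℝ)^2)⁻¹ else 0

lemma gg_nonneg (k m : ℕ) : 0 ≤ gg k m := by
  rw [gg]; split
  · positivity
  · exact le_rfl

lemma gg_summable (k : ℕ) : Summable (gg k) := by
  apply Summable.of_nonneg_of_le (gg_nonneg k) (f := fun m : ℕ => (k:ℝ)^2 * (1/(m:ℝ)^2))
    (fun m => ?_) (((summable_one_div_nat_pow (p := 2)).mpr (by norm_num)).mul_left ((k:ℝ)^2))
  rw [gg]; split
  · simp [one_div]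
  · positivity

lemma gg_tsum_le {k : ℕ} (hk : 1 ≤ k) : ∑' m, gg k m ≤ (k:ℝ) := by
  apply Summable.tsum_le_of_sum_le (gg_summable k)
  intro u
  set n := max (u.sup id) k with hn
  have hkn : k ≤ n := le_max_right _ _
  have hfil : ∑ m ∈ u, gg k m = ∑ m ∈ u.filter (fun m => k+1 ≤ m), gg k m := by
    rw [Finset.sum_filter_of_ne]
    intro m _ hm
    by_contra h
    exact hm (by rw [gg, if_neg h])
  rw [hfil]
  have hsub : u.filter (fun m => k+1 ≤ m) ⊆ Finset.Ioc k n := by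
    intro m hm
    rw [Finset.mem_filter] at hm
    rw [Finset.mem_Ioc]
    refine ⟨by omega, le_trans (Finset.le_sup (f := id) hm.1) (le_max_left _ _)⟩
  calc ∑ m ∈ u.filter (fun m => k+1 ≤ m), gg k m
      ≤ ∑ m ∈ Finset.Ioc k n, gg k m :=
        Finset.sum_le_sum_of_subset_of_nonneg hsub (fun m _ _ => gg_nonneg k m)
    _ = ∑ m ∈ Finset.Ioc k n, (k:ℝ)^2 * ((m:ℝ)^2)⁻¹ := by
        apply Finset.sum_congr rfl
        intro m hm
        rw [Finset.mem_Ioc] at hm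
        rw [gg, if_pos (by omega)]
    _ = (k:ℝ)^2 * ∑ m ∈ Finset.Ioc k n, ((m:ℝ)^2)⁻¹ := by rw [Finset.mul_sum]
    _ ≤ (k:ℝ)^2 * ((k:ℝ)⁻¹ - (n:ℝ)⁻¹) := by
        apply mul_le_mul_of_nonneg_left _ (by positivity)
        exact_mod_cast sum_Ioc_inv_sq_le_sub (by omega) hkn
    _ ≤ (k:ℝ)^2 * (k:ℝ)⁻¹ := by
        apply mul_le_mul_of_nonneg_left _ (by positivity)
        have : (0:ℝ) ≤ (n:ℝ)⁻¹ := by positivity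
        linarith
    _ = (k:ℝ) := by
        have hk0 : ((k:ℝ)) ≠ 0 := by positivity
        field_simp

section tail

variable {k : ℕ}

lemma tail_cast_sub (p : {x : Nat.Primes // x ∉ sFin k}) :
    (((p.1 : ℕ) - k : ℕ) : ℝ) = ((p.1 : ℕ) : ℝ) - (k : ℝ) := by
  have := tail_ge p.2
  push_cast [Nat.cast_sub (by omega : k ≤ (p.1 : ℕ))]
  ring

lemma tail_bound (hk : 1 ≤ k) (p : {x : Nat.Primes // x ∉ sFin k}) :
    -log (selF k p.1) ≤ gg k ((p.1 : ℕ) - k) := by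
  have hge := tail_ge p.2
  rw [gg, if_pos (by omega)]
  have := log_selF_tail_lb hk p.2
  rw [tail_cast_sub p]
  rw [div_eq_mul_inv] at this
  exact this

lemma tail_inj : Function.Injective
    (fun p : {x : Nat.Primes // x ∉ sFin k} => (p.1 : ℕ) - k) := by
  intro p q h
  have hp := tail_ge p.2
  have hq := tail_ge q.2
  simp only at h
  have : (p.1 : ℕ) = (q.1 : ℕ) := by omega
  exact Subtype.ext (Subtype.ext this)

lemma tail_summable_comp :
    Summable (fun p : {x : Nat.Primes // x ∉ sFin k} => gg k ((p.1 : ℕ) - k)) :=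
  (gg_summable k).comp_injective tail_inj

lemma tail_log_summable (hk : 1 ≤ k) :
    Summable (fun p : {x : Nat.Primes // x ∉ sFin k} => log (selF k p.1)) := by
  apply Summable.of_abs
  apply Summable.of_nonneg_of_le (fun p => abs_nonneg _) (fun p => ?_) tail_summable_comp
  rw [abs_of_nonpos (log_selF_tail_nonpos hk p.2)]
  exact tail_bound hk p

lemma log_summable (hk : 1 ≤ k) : Summable (fun p : Nat.Primes => log (selF k p)) :=
  (Finset.summable_compl_iff (sFin k)).mp (tail_log_summable hk)

lemma tail_tsum_ge (hk : 1 ≤ k) :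
    -(k:ℝ) ≤ ∑' p : {x : Nat.Primes // x ∉ sFin k}, log (selF k p.1) := by
  have h1 : ∑' p : {x : Nat.Primes // x ∉ sFin k}, (-log (selF k p.1))
      ≤ ∑' p : {x : Nat.Primes // x ∉ sFin k}, gg k ((p.1 : ℕ) - k) :=
    Summable.tsum_le_tsum (tail_bound hk) (tail_log_summable hk).neg tail_summable_comp
  have h2 : ∑' p : {x : Nat.Primes // x ∉ sFin k}, gg k ((p.1 : ℕ) - k) ≤ ∑' m, gg k m :=
    Summable.tsum_le_tsum_of_inj _ tail_inj (fun c _ => gg_nonneg k c) (fun p => le_rfl)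
      tail_summable_comp (gg_summable k)
  have h3 := gg_tsum_le hk
  rw [tsum_neg] at h1
  linarith

end tail

lemma nth_prime_two_eq_five : Nat.nth Nat.Prime 2 = 5 := by
  have h : Nat.count Nat.Prime 5 = 2 := by decide
  have := Nat.nth_count (p := Nat.Prime) (n := 5) (by norm_num)
  rwa [h] at this

lemma nth_prime_three_eq_seven : Nat.nth Nat.Prime 3 = 7 := by
  have h : Nat.count Nat.Prime 7 = 3 := by decide
  have := Nat.nth_count (p := Nat.Prime) (n := 7) (by norm_num)
  rwa [h] at this

lemma mem_sFin_of_lt {k i : ℕ} (hi : i < k) :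
    (⟨Nat.nth Nat.Prime i, Nat.prime_nth_prime i⟩ : Nat.Primes) ∈ sFin k :=
  Finset.mem_image.mpr ⟨i, Finset.mem_range.mpr hi, rfl⟩

lemma small_sum_ge {k : ℕ} (hk : 4 ≤ k) :
    ((k:ℝ) - 1) * (2 * Real.log 2) ≤ ∑ p ∈ sFin k, log (selF k p) := by
  have hk1 : 1 ≤ k := by omega
  have hsum : ∑ p ∈ sFin k, log (selF k p)
      = ∑ i ∈ range k, log (selF k ⟨Nat.nth Nat.Prime i, Nat.prime_nth_prime i⟩) := by
    rw [sFin]; apply Finset.sum_image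
    intro a _ b _ h
    exact Nat.nth_injective Nat.infinite_setOf_prime (congrArg Subtype.val h)
  rw [hsum]
  have hnn : ∀ i ∈ range k, 0 ≤ log (selF k ⟨Nat.nth Nat.Prime i, Nat.prime_nth_prime i⟩) :=
    fun i hi => log_selF_mem_nonneg hk1 (mem_sFin_of_lt (Finset.mem_range.mp hi))
  have hsub : ∑ i ∈ range 4, log (selF k ⟨Nat.nth Nat.Prime i, Nat.prime_nth_prime i⟩)
      ≤ ∑ i ∈ range k, log (selF k ⟨Nat.nth Nat.Prime i, Nat.prime_nth_prime i⟩) :=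
    Finset.sum_le_sum_of_subset_of_nonneg (Finset.range_subset_range.mpr hk)
      (fun i hi _ => hnn i hi)
  refine le_trans ?_ hsub
  have hv : ∀ i, i < k → log (selF k ⟨Nat.nth Nat.Prime i, Nat.prime_nth_prime i⟩)
      = (1-(k:ℝ)) * log (1 - 1/((Nat.nth Nat.Prime i : ℕ):ℝ)) :=
    fun i hi => log_selF_mem hk1 (mem_sFin_of_lt hi)
  rw [Finset.sum_range_succ, Finset.sum_range_succ, Finset.sum_range_succ,
    Finset.sum_range_one, hv 0 (by omega), hv 1 (by omega), hv 2 (by omega), hv 3 (by omega),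
    Nat.nth_prime_zero_eq_two, Nat.nth_prime_one_eq_three, _root_.nth_prime_two_eq_five,
    _root_.nth_prime_three_eq_seven]
  have hlogs : log (1 - 1/((2:ℕ):ℝ)) + log (1 - 1/((3:ℕ):ℝ)) + log (1 - 1/((5:ℕ):ℝ))
      + log (1 - 1/((7:ℕ):ℝ)) = Real.log (8/35) := by
    push_cast
    rw [show (1:ℝ) - 1/2 = 1/2 by norm_num, show (1:ℝ) - 1/3 = 2/3 by norm_num,
      show (1:ℝ) - 1/5 = 4/5 by norm_num, show (1:ℝ) - 1/7 = 6/7 by norm_num,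
      ← log_mul (by norm_num) (by norm_num), ← log_mul (by norm_num) (by norm_num),
      ← log_mul (by norm_num) (by norm_num)]
    norm_num
  have hL : (1-(k:ℝ)) * log (1 - 1/((2:ℕ):ℝ)) + (1-(k:ℝ)) * log (1 - 1/((3:ℕ):ℝ))
      + (1-(k:ℝ)) * log (1 - 1/((5:ℕ):ℝ)) + (1-(k:ℝ)) * log (1 - 1/((7:ℕ):ℝ))
      = ((k:ℝ)-1) * Real.log (35/8) := by
    have h8 : log ((8:ℝ)/35) = -Real.log (35/8) := by
      rw [← Real.log_inv]; norm_num
    have := hlogs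
    nlinarith [this, h8]
  calc ((k:ℝ) - 1) * (2 * Real.log 2) ≤ ((k:ℝ)-1) * Real.log (35/8) := by
        refine mul_le_mul_of_nonneg_left ?_ ?_
        · rw [show (2:ℝ) * Real.log 2 = Real.log (2^2) by rw [Real.log_pow]; push_cast; ring]
          exact Real.log_le_log (by norm_num) (by norm_num)
        · have : (4:ℝ) ≤ (k:ℝ) := by exact_mod_cast hk
          linarith
    _ = (1-(k:ℝ)) * log (1 - 1/((2:ℕ):ℝ)) + (1-(k:ℝ)) * log (1 - 1/((3:ℕ):ℝ))
      + (1-(k:ℝ)) * log (1 - 1/((5:ℕ):ℝ)) + (1-(k:ℝ)) * log (1 - 1/((7:ℕ):ℝ)) := hL.symm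

lemma selberg_key {k : ℕ} (hk : 4 ≤ k) :
    exp (((k:ℝ)-1)*(2*Real.log 2) - (k:ℝ)) ≤ ∏' p, selF k p := by
  have hk1 : 1 ≤ k := by omega
  have hprod : ∏' p, selF k p = exp (∑' p, log (selF k p)) := by
    exact (Real.rexp_tsum_eq_tprod (fun p => selF_pos hk1 p) (log_summable hk1)).symm
  rw [hprod]
  apply exp_le_exp.mpr
  have hsplit := Summable.sum_add_tsum_compl (s := sFin k) (log_summable (k := k) hk1)
  have h1 := small_sum_ge hk
  have h2 := tail_tsum_ge (k := k) hk1
  have h2' : -(k:ℝ) ≤ ∑' (x : ↑(↑(sFin k) : Set Nat.Primes)ᶜ), Real.log (selF k ↑x) := h2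
  rw [← hsplit]
  linarith

/-- The Selberg constants `𝔖(H_k) = ∏_p (1 - ν_p(H_k)/p)·(1 - 1/p)^{-k}` of the primorial
patterns `H_k` tend to infinity as `k → ∞`. -/
theorem selberg_primorial_tendsto_atTop :
    Filter.Tendsto
      (fun k : ℕ => ∏' p : Nat.Primes,
        (1 - (nu p (patternHk k) : ℝ) / ((p : ℕ) : ℝ)) * (1 - 1 / ((p : ℕ) : ℝ)) ^ (-(k : ℤ)))
      Filter.atTop Filter.atTop := by
  apply tendsto_atTop_mono' Filter.atTop
    (f₁ := fun k : ℕ => Real.exp (((k:ℝ)-1)*(2*Real.log 2) - (k:ℝ)))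
  · filter_upwards [Filter.eventually_ge_atTop 4] with k hk
    exact selberg_key hk
  · apply Real.tendsto_exp_atTop.comp
    have h2 : (0:ℝ) < 2*Real.log 2 - 1 := by
      have := Real.log_two_gt_d9; linarith
    have haff : Filter.Tendsto (fun x : ℝ => (x-1)*(2*Real.log 2) - x) Filter.atTop Filter.atTop := by
      apply Filter.Tendsto.congr (f₁ := fun x : ℝ => x * (2*Real.log 2 - 1) + (-(2*Real.log 2)))
        (fun x => by ring)
      exact tendsto_atTop_add_const_right _ _ (Filter.tendsto_id.atTop_mul_const h2)
    exact haff.comp tendsto_natCast_atTop_atTop
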